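/- Let 1 ≤ p < ∞, let d ≥ 1, set φ(z) = z_1 + z_2 + ⋯ + z_d on 𝕋^d, and define ψ(z) = d · ‖φ‖_{L^p(𝕋^d)}^{-p} · |φ(z)|^{p-2} φ(z) (defined μ_d-almost everywhere, since φ ≠ 0 almost everywhere). Then ψ ∈ L^q(𝕋^d), where q = p/(p-1) is the conjugate exponent of p (q = ∞ when p = 1), and for every multi-index α ∈ ℕ₀^d one has ∫_{𝕋^d} ψ(z) · conj(z_1^{α_1} ⋯ z_d^{α_d}) dμ_d(z) = 1 if α is a standard unit vector e_j for some 1 ≤ j ≤ d, and = 0 for every other α ∈ ℕ₀^d. In other words, the Riesz projection of ψ equals φ. -/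

import Mathlib

open MeasureTheory Complex Filter
open scoped ENNReal NNReal

noncomputable instance : MeasurableSpace Circle := borel Circle
instance : BorelSpace Circle := ⟨rfl⟩

/-- The normalized Lebesgue arc measure on the unit circle, i.e. its Haar probability
measure. -/
noncomputable def muCircle : Measure Circle := Measure.haarMeasure ⊤

instance : IsProbabilityMeasure muCircle :=
  ⟨by simpa [muCircle] using
    Measure.haarMeasure_self (K₀ := (⊤ : TopologicalSpace.PositiveCompacts Circle))⟩

/-- The probability measure `μ_d` on `𝕋^d`: the product of normalized Lebesgue arc
measures. -/
noncomputable def muD (d : ℕ) : Measure (Fin d → Circle) := Measure.pi fun _ => muCircle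

/-- `φ(z) = z_1 + ⋯ + z_d` on `𝕋^d`. -/
noncomputable def phiD (d : ℕ) : (Fin d → Circle) → ℂ := fun z => ∑ j, (z j : ℂ)

/-- The `L^p(𝕋^d)` norm of `φ`. -/
noncomputable def phiNorm (p : ℝ) (d : ℕ) : ℝ :=
  (∫ z : Fin d → Circle, ‖phiD d z‖ ^ p ∂muD d) ^ (1 / p)

/-- The extremal function `ψ(z) = d ‖φ‖_p^{-p} |φ(z)|^{p-2} φ(z)`. -/
noncomputable def psiFn (p : ℝ) (d : ℕ) : (Fin d → Circle) → ℂ := fun z =>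
  ((d * (phiNorm p d) ^ (-p) : ℝ) : ℂ) * ((‖phiD d z‖ ^ (p - 2) : ℝ) : ℂ) * phiD d z

instance : Measure.IsOpenPosMeasure muCircle := by unfold muCircle; infer_instance
instance : Measure.IsMulLeftInvariant muCircle := by unfold muCircle; infer_instance
instance (d : ℕ) : IsProbabilityMeasure (muD d) := by unfold muD; infer_instance
instance (d : ℕ) : Measure.IsOpenPosMeasure (muD d) := by unfold muD; infer_instance

lemma norm_circle (x : Circle) : ‖(x : ℂ)‖ = 1 := by
  rw [Circle.norm_coe]

lemma phiD_cont (d : ℕ) : Continuous (phiD d) :=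
  continuous_finset_sum _ fun j _ => continuous_subtype_val.comp (continuous_apply j)

lemma phiD_norm_le (d : ℕ) (z : Fin d → Circle) : ‖phiD d z‖ ≤ d := by
  calc ‖phiD d z‖ ≤ ∑ j : Fin d, ‖(z j : ℂ)‖ := norm_sum_le _ _
  _ = d := by simp [norm_circle]

lemma psiFn_meas (p : ℝ) (d : ℕ) : Measurable (psiFn p d) := by
  have h1 : Measurable (phiD d) := (phiD_cont d).measurable
  have h2 : Measurable fun z => ‖phiD d z‖ ^ (p - 2) := h1.norm.pow_const (p - 2)
  exact (measurable_const.mul (Complex.measurable_ofReal.comp h2)).mul h1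

lemma phiNorm_nonneg (p : ℝ) (d : ℕ) : 0 ≤ phiNorm p d :=
  Real.rpow_nonneg (integral_nonneg fun z => Real.rpow_nonneg (norm_nonneg _) p) _

lemma aux_rpow_bound (p : ℝ) (hp : 1 ≤ p) (d : ℕ) (z : Fin d → Circle) :
    ‖phiD d z‖ ^ (p - 2) * ‖phiD d z‖ ≤ (d : ℝ) ^ (p - 1) := by
  rcases eq_or_ne ‖phiD d z‖ 0 with h | h
  · rw [h]
    simpa using Real.rpow_nonneg (Nat.cast_nonneg d) (p - 1)
  · have h1 : ‖phiD d z‖ ^ (p - 2) * ‖phiD d z‖ = ‖phiD d z‖ ^ (p - 1) := by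
      have : p - 1 = (p - 2) + 1 := by ring
      rw [this, Real.rpow_add_one h]
    rw [h1]
    exact Real.rpow_le_rpow (norm_nonneg _) (phiD_norm_le d z) (by linarith)

lemma psiFn_bound (p : ℝ) (hp : 1 ≤ p) (d : ℕ) (z : Fin d → Circle) :
    ‖psiFn p d z‖ ≤ d * (phiNorm p d) ^ (-p) * (d : ℝ) ^ (p - 1) := by
  have hC : (0:ℝ) ≤ d * (phiNorm p d) ^ (-p) :=
    mul_nonneg (Nat.cast_nonneg d) (Real.rpow_nonneg (phiNorm_nonneg p d) _)
  have : ‖psiFn p d z‖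
      = (d * (phiNorm p d) ^ (-p)) * (‖phiD d z‖ ^ (p - 2) * ‖phiD d z‖) := by
    simp only [psiFn, norm_mul, Complex.norm_real, Real.norm_eq_abs,
      _root_.abs_of_nonneg (Real.rpow_nonneg (phiNorm_nonneg p d) (-p)),
      _root_.abs_of_nonneg (Real.rpow_nonneg (norm_nonneg (phiD d z)) (p - 2)), Nat.abs_cast]
    ring
  rw [this]
  exact mul_le_mul_of_nonneg_left (aux_rpow_bound p hp d z) hC

lemma psiFn_aesm (p : ℝ) (d : ℕ) : AEStronglyMeasurable (psiFn p d) (muD d) :=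
  (psiFn_meas p d).aestronglyMeasurable

lemma integrable_psi_mul (p : ℝ) (hp : 1 ≤ p) (d : ℕ) (g : (Fin d → Circle) → ℂ)
    (hg : Measurable g) (C : ℝ) (hgb : ∀ z, ‖g z‖ ≤ C) :
    Integrable (fun z => psiFn p d z * g z) (muD d) := by
  rw [← memLp_one_iff_integrable]
  refine MemLp.of_bound (((psiFn_meas p d).mul hg).aestronglyMeasurable)
    ((d * (phiNorm p d) ^ (-p) * (d : ℝ) ^ (p - 1)) * C) (.of_forall fun z => ?_)
  rw [norm_mul]
  exact mul_le_mul (psiFn_bound p hp d z) (hgb z) (norm_nonneg _)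
    (le_trans (norm_nonneg _) (psiFn_bound p hp d z))

lemma mono_meas (d : ℕ) (α : Fin d → ℕ) :
    Measurable fun z : Fin d → Circle => ∏ j, (z j : ℂ) ^ α j :=
  Finset.measurable_prod _ fun j _ =>
    ((continuous_subtype_val.comp (continuous_apply j)).measurable.pow_const (α j))

lemma mono_norm (d : ℕ) (α : Fin d → ℕ) (z : Fin d → Circle) :
    ‖∏ j, (z j : ℂ) ^ α j‖ = 1 := by
  rw [norm_prod]
  simp [norm_circle]
noncomputable def rotE (w : Circle) : Circle ≃ᵐ Circle :=
  (Homeomorph.mulLeft w).toMeasurableEquiv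

lemma rotE_apply (w x : Circle) : rotE w x = w * x := rfl

lemma mp_piCongrRight {ι : Type*} [Fintype ι] {α : ι → Type*}
    [∀ i, MeasurableSpace (α i)] {μ : ∀ i, Measure (α i)} [∀ i, SigmaFinite (μ i)]
    (e : ∀ i, α i ≃ᵐ α i) (he : ∀ i, MeasurePreserving (e i) (μ i) (μ i)) :
    MeasurePreserving (MeasurableEquiv.piCongrRight e) (Measure.pi μ) (Measure.pi μ) := by
  refine ⟨(MeasurableEquiv.piCongrRight e).measurable, ?_⟩
  refine (Measure.pi_eq fun s hs => ?_).symm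
  rw [MeasurableEquiv.map_apply]
  have h : MeasurableEquiv.piCongrRight e ⁻¹' Set.pi Set.univ s
      = Set.pi Set.univ fun i => e i ⁻¹' s i := by
    ext x
    simp [MeasurableEquiv.piCongrRight, Equiv.piCongrRight, Set.mem_pi]
  rw [h, Measure.pi_pi]
  exact Finset.prod_congr rfl fun i _ =>
    (he i).measure_preimage (hs i).nullMeasurableSet

lemma mp_rot (d : ℕ) (w : Circle) :
    MeasurePreserving (MeasurableEquiv.piCongrRight fun _ : Fin d => rotE w)
      (muD d) (muD d) :=
  mp_piCongrRight _ fun _ => measurePreserving_mul_left muCircle w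

lemma mp_perm (d : ℕ) (σ : Equiv.Perm (Fin d)) :
    MeasurePreserving (MeasurableEquiv.piCongrLeft (fun _ : Fin d => Circle) σ)
      (muD d) (muD d) :=
  measurePreserving_piCongrLeft (fun _ => muCircle) σ

lemma psi_rot (p : ℝ) (d : ℕ) (w : Circle) (z : Fin d → Circle) :
    psiFn p d (fun j => w * z j) = (w : ℂ) * psiFn p d z := by
  have hphi : phiD d (fun j => w * z j) = (w : ℂ) * phiD d z := by
    simp [phiD, Finset.mul_sum]
  have hnorm : ‖phiD d (fun j => w * z j)‖ = ‖phiD d z‖ := by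
    rw [hphi, norm_mul, norm_circle, one_mul]
  simp only [psiFn, hphi, norm_mul, norm_circle, one_mul]
  ring

lemma rotF_apply (d : ℕ) (w : Circle) (z : Fin d → Circle) :
    (MeasurableEquiv.piCongrRight fun _ : Fin d => rotE w) z = fun j => w * z j := rfl

lemma I_rot (p : ℝ) (d : ℕ) (α : Fin d → ℕ) (w : Circle) :
    (∫ z : Fin d → Circle,
        psiFn p d z * (starRingEnd ℂ) (∏ j, (z j : ℂ) ^ α j) ∂muD d)
      = ((w : ℂ) * (starRingEnd ℂ (w : ℂ)) ^ (∑ j, α j)) *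
        ∫ z : Fin d → Circle,
          psiFn p d z * (starRingEnd ℂ) (∏ j, (z j : ℂ) ^ α j) ∂muD d := by
  conv_lhs => rw [← (mp_rot d w).integral_comp'
    (g := fun z => psiFn p d z * (starRingEnd ℂ) (∏ j, (z j : ℂ) ^ α j))]
  have hpt : ∀ z : Fin d → Circle,
      psiFn p d ((MeasurableEquiv.piCongrRight fun _ : Fin d => rotE w) z) *
        (starRingEnd ℂ) (∏ j,
          (((MeasurableEquiv.piCongrRight fun _ : Fin d => rotE w) z) j : ℂ) ^ α j)
      = ((w : ℂ) * (starRingEnd ℂ (w : ℂ)) ^ (∑ j, α j)) *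
        (psiFn p d z * (starRingEnd ℂ) (∏ j, (z j : ℂ) ^ α j)) := by
    intro z
    rw [rotF_apply, psi_rot]
    have hmono : (∏ j, ((w * z j : Circle) : ℂ) ^ α j)
        = (w : ℂ) ^ (∑ j, α j) * ∏ j, (z j : ℂ) ^ α j := by
      simp only [Circle.coe_mul, mul_pow, Finset.prod_mul_distrib,
        Finset.prod_pow_eq_pow_sum]
    rw [hmono, map_mul, map_pow]
    ring
  simp_rw [hpt]
  rw [integral_const_mul]

lemma I_perm (p : ℝ) (d : ℕ) (σ : Equiv.Perm (Fin d)) (α : Fin d → ℕ) :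
    (∫ z : Fin d → Circle,
        psiFn p d z * (starRingEnd ℂ) (∏ j, (z j : ℂ) ^ α (σ j)) ∂muD d)
      = ∫ z : Fin d → Circle,
          psiFn p d z * (starRingEnd ℂ) (∏ j, (z j : ℂ) ^ α j) ∂muD d := by
  rw [← (mp_perm d σ).integral_comp'
    (g := fun z => psiFn p d z * (starRingEnd ℂ) (∏ j, (z j : ℂ) ^ α j))]
  refine integral_congr_ae (.of_forall fun z => ?_)
  have happ : ∀ j, (MeasurableEquiv.piCongrLeft (fun _ : Fin d => Circle) σ) z (σ j) = z j :=
    fun j => MeasurableEquiv.piCongrLeft_apply_apply (β := fun _ : Fin d => Circle) σ z j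
  set F := MeasurableEquiv.piCongrLeft (fun _ : Fin d => Circle) σ with hF
  have hphi : phiD d (F z) = phiD d z := by
    rw [phiD, phiD, ← Equiv.sum_comp σ (fun i => ((F z) i : ℂ))]
    exact Finset.sum_congr rfl fun j _ => by rw [happ]
  have hmono : (∏ j, ((F z) j : ℂ) ^ α j) = ∏ j, (z j : ℂ) ^ α (σ j) := by
    rw [← Equiv.prod_comp σ (fun i => ((F z) i : ℂ) ^ α i)]
    exact Finset.prod_congr rfl fun j _ => by rw [happ]
  simp only [psiFn, hphi, hmono]

lemma integrable_normphi_rpow (p : ℝ) (hp : 1 ≤ p) (d : ℕ) :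
    Integrable (fun z => ‖phiD d z‖ ^ p) (muD d) := by
  rw [← memLp_one_iff_integrable]
  refine MemLp.of_bound (((phiD_cont d).measurable.norm.pow_const p).aestronglyMeasurable)
    ((d : ℝ) ^ p) (.of_forall fun z => ?_)
  rw [Real.norm_eq_abs, _root_.abs_of_nonneg (Real.rpow_nonneg (norm_nonneg _) _)]
  exact Real.rpow_le_rpow (norm_nonneg _) (phiD_norm_le d z) (by linarith)

lemma S_pos (p : ℝ) (hp : 1 ≤ p) (d : ℕ) (hd : 1 ≤ d) :
    0 < ∫ z : Fin d → Circle, ‖phiD d z‖ ^ p ∂muD d := by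
  rw [integral_pos_iff_support_of_nonneg
    (fun z => Real.rpow_nonneg (norm_nonneg _) p) (integrable_normphi_rpow p hp d)]
  have hsub : (phiD d ⁻¹' {0}ᶜ) ⊆ Function.support fun z => ‖phiD d z‖ ^ p := by
    intro z hz
    have h0 : phiD d z ≠ 0 := hz
    exact ne_of_gt (Real.rpow_pos_of_pos (norm_pos_iff.mpr h0) p)
  refine lt_of_lt_of_le ?_ (measure_mono hsub)
  refine IsOpen.measure_pos (muD d) (isOpen_compl_singleton.preimage (phiD_cont d)) ?_
  refine ⟨fun _ => 1, ?_⟩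
  have : phiD d (fun _ => 1) = (d : ℂ) := by simp [phiD]
  simp only [Set.mem_preimage, Set.mem_compl_iff, Set.mem_singleton_iff, this]
  exact_mod_cast Nat.cast_ne_zero.mpr (by omega)

lemma key_const (p : ℝ) (hp : 1 ≤ p) (d : ℕ) (hd : 1 ≤ d) :
    (d * (phiNorm p d) ^ (-p)) * (∫ z : Fin d → Circle, ‖phiD d z‖ ^ p ∂muD d)
      = (d : ℝ) := by
  have hp0 : p ≠ 0 := by linarith
  have hS : 0 < ∫ z : Fin d → Circle, ‖phiD d z‖ ^ p ∂muD d := S_pos p hp d hd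
  have hNp : (phiNorm p d) ^ p = ∫ z : Fin d → Circle, ‖phiD d z‖ ^ p ∂muD d := by
    rw [phiNorm, ← Real.rpow_mul hS.le, one_div_mul_cancel hp0, Real.rpow_one]
  rw [Real.rpow_neg (phiNorm_nonneg p d), hNp, mul_assoc,
    inv_mul_cancel₀ hS.ne', mul_one]

lemma I_phi (p : ℝ) (hp : 1 ≤ p) (d : ℕ) (hd : 1 ≤ d) :
    ∫ z : Fin d → Circle, psiFn p d z * (starRingEnd ℂ) (phiD d z) ∂muD d = (d : ℂ) := by
  have hp0 : p ≠ 0 := by linarith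
  have hpt : ∀ z : Fin d → Circle, psiFn p d z * (starRingEnd ℂ) (phiD d z)
      = (((d * (phiNorm p d) ^ (-p)) * (‖phiD d z‖ ^ p) : ℝ) : ℂ) := by
    intro z
    rcases eq_or_ne (phiD d z) 0 with h | h
    · simp [psiFn, h, Real.zero_rpow hp0]
    · have h2 : (phiD d z) * (starRingEnd ℂ) (phiD d z)
          = ((‖phiD d z‖ ^ (2 : ℕ) : ℝ) : ℂ) := by
        rw [Complex.mul_conj, Complex.normSq_eq_norm_sq]
      have hr : ‖phiD d z‖ ^ (p - 2) * ‖phiD d z‖ ^ (2 : ℕ) = ‖phiD d z‖ ^ p := by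
        rw [← Real.rpow_natCast ‖phiD d z‖ 2, ← Real.rpow_add (norm_pos_iff.mpr h)]
        norm_num
      calc psiFn p d z * (starRingEnd ℂ) (phiD d z)
          = ((d * (phiNorm p d) ^ (-p) : ℝ) : ℂ) *
            (((‖phiD d z‖ ^ (p - 2) : ℝ) : ℂ) * ((‖phiD d z‖ ^ (2 : ℕ) : ℝ) : ℂ)) := by
            rw [← h2]; simp only [psiFn]; ring
        _ = _ := by rw [← Complex.ofReal_mul, hr, ← Complex.ofReal_mul]
  simp_rw [hpt]
  have hORC : (∫ z : Fin d → Circle,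
        (((d * phiNorm p d ^ (-p) * ‖phiD d z‖ ^ p : ℝ)) : ℂ) ∂muD d)
      = (((∫ z : Fin d → Circle, d * phiNorm p d ^ (-p) * ‖phiD d z‖ ^ p ∂muD d : ℝ)) : ℂ) :=
    integral_ofReal
  rw [hORC, integral_const_mul, key_const p hp d hd]
  norm_cast

lemma mono_single (d : ℕ) (j : Fin d) (z : Fin d → Circle) :
    (∏ k, (z k : ℂ) ^ (Pi.single j 1 : Fin d → ℕ) k) = (z j : ℂ) := by
  rw [Fintype.prod_eq_single j (fun k hk => by rw [Pi.single_eq_of_ne hk, pow_zero])]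
  simp

lemma I_single (p : ℝ) (hp : 1 ≤ p) (d : ℕ) (hd : 1 ≤ d) (j : Fin d) :
    ∫ z : Fin d → Circle,
      psiFn p d z * (starRingEnd ℂ) (∏ k, (z k : ℂ) ^ (Pi.single j 1 : Fin d → ℕ) k) ∂muD d
        = 1 := by
  set J : Fin d → ℂ := fun i => ∫ z : Fin d → Circle,
    psiFn p d z * (starRingEnd ℂ) (∏ k, (z k : ℂ) ^ (Pi.single i 1 : Fin d → ℕ) k) ∂muD d
    with hJ
  have hJeq : ∀ i : Fin d, J i = J j := by
    intro i
    have hcomp : ∀ k, (Pi.single i 1 : Fin d → ℕ) ((Equiv.swap i j) k)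
        = (Pi.single j 1 : Fin d → ℕ) k := by
      intro k
      rcases eq_or_ne k j with rfl | hk
      · rw [Equiv.swap_apply_right, Pi.single_eq_same, Pi.single_eq_same]
      · have : (Equiv.swap i j) k ≠ i := by
          intro hE
          apply hk
          have := (Equiv.swap i j).injective (a₁ := k) (a₂ := j)
          exact this (by rw [hE, Equiv.swap_apply_right])
        rw [Pi.single_eq_of_ne this, Pi.single_eq_of_ne hk]
    have := I_perm p d (Equiv.swap i j) (Pi.single i 1)
    simp_rw [hcomp] at this
    exact this.symm
  have hint : ∀ i : Fin d, Integrable (fun z : Fin d → Circle =>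
      psiFn p d z * (starRingEnd ℂ) (∏ k, (z k : ℂ) ^ (Pi.single i 1 : Fin d → ℕ) k))
      (muD d) := by
    intro i
    refine integrable_psi_mul p hp d _
      (Complex.continuous_conj.measurable.comp (mono_meas d _)) 1 fun z => ?_
    rw [RCLike.norm_conj, mono_norm]
  have hsum : ∑ i : Fin d, J i = (d : ℂ) := by
    rw [hJ, ← integral_finset_sum _ fun i _ => hint i, ← I_phi p hp d hd]
    refine integral_congr_ae (.of_forall fun z => ?_)
    simp_rw [mono_single]
    rw [← Finset.mul_sum, ← map_sum]
    rfl
  have hdC : (d : ℂ) ≠ 0 := Nat.cast_ne_zero.mpr (by omega)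
  have : (d : ℂ) * J j = (d : ℂ) := by
    calc (d : ℂ) * J j = ∑ i : Fin d, J j := by
          rw [Finset.sum_const, Finset.card_univ, Fintype.card_fin, nsmul_eq_mul]
      _ = ∑ i : Fin d, J i := (Finset.sum_congr rfl fun i _ => (hJeq i).symm)
      _ = (d : ℂ) := hsum
  have := mul_left_cancel₀ hdC (this.trans (mul_one (d : ℂ)).symm)
  exact this

lemma sum_eq_one_single {d : ℕ} (α : Fin d → ℕ) (h : ∑ j, α j = 1) :
    ∃ j, α = Pi.single j 1 := by
  obtain ⟨j, -, hj⟩ := Finset.exists_ne_zero_of_sum_ne_zero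
    (show ∑ j, α j ≠ 0 by rw [h]; exact one_ne_zero)
  have hle : α j ≤ 1 := h ▸ Finset.single_le_sum (f := α)
    (fun k _ => Nat.zero_le _) (Finset.mem_univ j)
  have hj1 : α j = 1 := le_antisymm hle (Nat.one_le_iff_ne_zero.mpr hj)
  refine ⟨j, funext fun k => ?_⟩
  rcases eq_or_ne k j with rfl | hk
  · simp [hj1]
  · have hadd := Finset.add_sum_erase Finset.univ α (Finset.mem_univ j)
    rw [h] at hadd
    have h0 : ∑ i ∈ Finset.univ.erase j, α i = 0 := by omega
    have := (Finset.sum_eq_zero_iff).mp h0 k (Finset.mem_erase.mpr ⟨hk, Finset.mem_univ k⟩)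
    rw [Pi.single_eq_of_ne hk, this]

lemma I_zero (p : ℝ) (d : ℕ) (α : Fin d → ℕ) (hn : ∑ j, α j ≠ 1) :
    ∫ z : Fin d → Circle,
      psiFn p d z * (starRingEnd ℂ) (∏ j, (z j : ℂ) ^ α j) ∂muD d = 0 := by
  set n := ∑ j, α j with hns
  have hne : (1 : ℝ) - n ≠ 0 := by
    intro h
    apply hn
    have : (n : ℝ) = 1 := by linarith
    exact_mod_cast this
  set θ : ℝ := Real.pi / (1 - n) with hθdef
  have hconj : (starRingEnd ℂ) ((θ : ℂ) * I) = -((θ : ℂ) * I) := by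
    rw [map_mul, Complex.conj_ofReal, Complex.conj_I]; ring
  have hc : ((Circle.exp θ : Circle) : ℂ) *
      (starRingEnd ℂ ((Circle.exp θ : Circle) : ℂ)) ^ n = -1 := by
    rw [Circle.coe_exp, ← Complex.exp_conj, hconj, ← Complex.exp_nat_mul,
      ← Complex.exp_add]
    have harg : (θ : ℂ) * I + (n : ℂ) * -((θ : ℂ) * I) = (Real.pi : ℂ) * I := by
      have hθ : ((1 : ℝ) - n) * θ = Real.pi := by
        rw [hθdef]; field_simp
      have : ((1 : ℝ) - (n : ℝ)) * (θ : ℂ) = (Real.pi : ℂ) := by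
        exact_mod_cast congrArg (Complex.ofReal) hθ
      push_cast at this ⊢
      linear_combination I * this
    rw [harg, Complex.exp_pi_mul_I]
  have hrot := I_rot p d α (Circle.exp θ)
  rw [hc] at hrot
  have h2 : (2 : ℂ) * (∫ z : Fin d → Circle,
      psiFn p d z * (starRingEnd ℂ) (∏ j, (z j : ℂ) ^ α j) ∂muD d) = 0 := by
    linear_combination hrot
  have := mul_eq_zero.mp h2
  simpa using this


open scoped Classical in
/-- `ψ ∈ L^q(𝕋^d)` and the Riesz projection of `ψ` equals `φ`, i.e. the
analytic Fourier coefficients of `ψ` are `1` at the unit multi-indices `e_j` and `0` at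
every other `α ∈ ℕ₀^d`. -/
theorem psi_memLq_and_fourier (p : ℝ) (hp : 1 ≤ p) (d : ℕ) (hd : 1 ≤ d) (q : ℝ≥0∞)
    (hq : (ENNReal.ofReal p)⁻¹ + q⁻¹ = 1) :
    MemLp (psiFn p d) q (muD d) ∧
      ∀ α : Fin d → ℕ,
        ∫ z : Fin d → Circle, psiFn p d z * (starRingEnd ℂ) (∏ j, (z j : ℂ) ^ α j) ∂muD d
          = if ∃ j : Fin d, α = Pi.single j 1 then 1 else 0 := by
  refine ⟨MemLp.of_bound (psiFn_aesm p d) _ (.of_forall (psiFn_bound p hp d)), fun α => ?_⟩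
  by_cases hn : ∑ j, α j = 1
  · obtain ⟨j, rfl⟩ := sum_eq_one_single α hn
    rw [if_pos ⟨j, rfl⟩]
    exact I_single p hp d hd j
  · rw [if_neg, I_zero p d α hn]
    rintro ⟨j, rfl⟩
    apply hn
    rw [Fintype.sum_eq_single j (fun k hk => Pi.single_eq_of_ne hk 1), Pi.single_eq_same]
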